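/- Fix an index i with 1 ≤ i ≤ N. The gradient of the i-th pooling score S(A,H)_i with respect to the whole i-th row of the adjacency matrix is the vector g ∈ ℝ^{N} whose j-th component is g_j = d_i · d_j · ((Ď_{row j} ∘ A_{row j}) · (H W θ)) + a_{ii} · d_i³ · d_j · (H_{row j} · (W θ)); that is, for every j = 1, …, N, the derivative at t = 0 of t ↦ S(A + t·E_{ij}, H)_i equals g_j, where E_{ij} is the matrix with 1 in position (i,j) and 0 elsewhere. -/

import Mathlib

open Matrix BigOperators

/-- Hadamard-weighted adjacency `Ď ∘ A`, where `Ď k l = d k * d l`. -/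
noncomputable def DhadA {N : ℕ} (d : Fin N → ℝ) (A : Matrix (Fin N) (Fin N) ℝ) :
    Matrix (Fin N) (Fin N) ℝ :=
  Matrix.of fun k l => d k * d l * A k l

/-- Pooling score vector `S(A,H) = (Ď∘A)((Ď∘A) H W) θ` of the surrogate model. -/
noncomputable def poolScore {N D F : ℕ} (d : Fin N → ℝ)
    (A : Matrix (Fin N) (Fin N) ℝ) (H : Matrix (Fin N) (Fin D) ℝ)
    (W : Matrix (Fin D) (Fin F) ℝ) (θ : Fin F → ℝ) : Fin N → ℝ :=
  (DhadA d A).mulVec (((DhadA d A) * H * W).mulVec θ)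

/-- Theorem 1 of the paper (row-gradient form): the gradient of the i-th pooling score
with respect to the i-th row of the adjacency matrix is the vector `g` with
`g j = d_i d_j ((Ď_{row j} ∘ A_{row j}) · (H W θ)) + a_{ii} d_i³ d_j (H_{row j} · (W θ))`. -/
theorem grad_poolScore_adj_row {N D F : ℕ} (hN : 0 < N) (hD : 0 < D) (hF : 0 < F)
    (d : Fin N → ℝ) (A : Matrix (Fin N) (Fin N) ℝ)
    (H : Matrix (Fin N) (Fin D) ℝ) (W : Matrix (Fin D) (Fin F) ℝ)
    (θ : Fin F → ℝ) (i : Fin N) :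
    ∀ j : Fin N,
      deriv (fun t : ℝ =>
          poolScore d (A + t • Matrix.single i j (1 : ℝ)) H W θ i) 0 =
        d i * d j * (∑ k, (d j * d k * A j k) * ((H * W).mulVec θ) k)
          + A i i * (d i) ^ 3 * d j * ((H * W).mulVec θ) j := by
  intro j
  set u : Fin N → ℝ := (H * W).mulVec θ with hu
  set E : Matrix (Fin N) (Fin N) ℝ := Matrix.single i j 1 with hE
  have hfun : (fun t : ℝ => poolScore d (A + t • E) H W θ i)
      = fun t : ℝ => ∑ m, (d i * d m * (A i m + t * E i m)) *
            (∑ k, d m * d k * (A m k + t * E m k) * u k) := by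
    funext t
    unfold poolScore DhadA
    rw [Matrix.mul_assoc, ← Matrix.mulVec_mulVec]
    simp only [Matrix.mulVec, dotProduct, Matrix.of_apply, Matrix.add_apply,
      Matrix.smul_apply, smul_eq_mul, hu]
  rw [hfun]
  have hd : HasDerivAt (fun t : ℝ => ∑ m, (d i * d m * (A i m + t * E i m)) *
            (∑ k, d m * d k * (A m k + t * E m k) * u k))
      (∑ m, ((d i * d m * E i m) * (∑ k, d m * d k * A m k * u k)
          + (d i * d m * A i m) * (∑ k, d m * d k * E m k * u k))) 0 := by
    apply HasDerivAt.fun_sum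
    intro m _
    have h1 : HasDerivAt (fun t : ℝ => d i * d m * (A i m + t * E i m))
        (d i * d m * E i m) 0 := by
      have base : HasDerivAt (fun t : ℝ => A i m + t * E i m) (E i m) 0 := by
        simpa using ((hasDerivAt_id (0:ℝ)).mul_const (E i m)).const_add (A i m)
      simpa using base.const_mul (d i * d m)
    have h2 : HasDerivAt (fun t : ℝ => ∑ k, d m * d k * (A m k + t * E m k) * u k)
        (∑ k, d m * d k * E m k * u k) 0 := by
      apply HasDerivAt.fun_sum
      intro k _
      have base : HasDerivAt (fun t : ℝ => A m k + t * E m k) (E m k) 0 := by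
        simpa using ((hasDerivAt_id (0:ℝ)).mul_const (E m k)).const_add (A m k)
      simpa [mul_assoc, mul_comm, mul_left_comm] using
        (base.const_mul (d m * d k)).mul_const (u k)
    have := h1.fun_mul h2
    simpa using this
  rw [hd.deriv]
  have hDj : d i * d j * (∑ k, d j * d k * A j k * u k)
      + A i i * d i ^ 3 * d j * u j
      = ∑ m, ((d i * d m * E i m) * (∑ k, d m * d k * A m k * u k)
          + (d i * d m * A i m) * (∑ k, d m * d k * E m k * u k)) := by
    simp only [hE, Matrix.single, Matrix.of_apply]
    simp [Finset.sum_add_distrib, mul_ite, ite_mul, Finset.sum_ite_eq,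
      Finset.sum_ite_eq', ite_and]
    ring
  rw [← hDj]
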